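/- Assume σ is d-dimensional. Let A ⊆ σ^∨ ∩ ℤ^d be finite and nonempty, and for u ∈ σ^∨ ∩ ℤ^d define μ_A(u) := sup_{ω ∈ σ^∨ \ O} λ_A(u + ω). Then for every finite nonempty set B ⊆ σ^∨ ∩ ℤ^d, the infimum of μ_A(u) over all u ∈ B + (σ^∨ ∩ ℤ^d) (the exponents of all monomials of the monomial ideal generated by B) equals min_{b ∈ B} μ_A(b). -/

import Mathlib

open Finset Filter Pointwise

noncomputable section

namespace Paper

variable {d n : ℕ}

/-- The standard inner product pairing on `ℝ^d`. -/
def pair (u w : Fin d → ℝ) : ℝ := ∑ i, u i * w i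

/-- The coercion `ℤ^d → ℝ^d`. -/
def toR (u : Fin d → ℤ) : Fin d → ℝ := fun i => (u i : ℝ)

/-- The cone generated by the integer vectors `v 1, …, v n`. -/
def cone (v : Fin n → Fin d → ℤ) : Set (Fin d → ℝ) :=
  {x | ∃ c : Fin n → ℝ, (∀ j, 0 ≤ c j) ∧ x = ∑ j, c j • toR (v j)}

/-- The dual cone `σ^∨ = {u | ⟨u, x⟩ ≥ 0 for all x ∈ σ}`. -/
def dualCone (v : Fin n → Fin d → ℤ) : Set (Fin d → ℝ) :=
  {u | ∀ x ∈ cone v, 0 ≤ pair u x}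

/-- Strong convexity of the cone generated by `v`. -/
def StronglyConvex (v : Fin n → Fin d → ℤ) : Prop :=
  ∀ x ∈ cone v, -x ∈ cone v → x = 0

/-- An integer vector is primitive if the gcd of its coordinates is 1. -/
def IsPrimitive (w : Fin d → ℤ) : Prop := Finset.univ.gcd w = 1

/-- The cone generated by `v` is `d`-dimensional. -/
def FullDim (v : Fin n → Fin d → ℤ) : Prop :=
  Submodule.span ℝ (Set.range fun j => toR (v j)) = ⊤

/-- The Newton polyhedron `P(A) = conv(A) + σ^∨`. -/
def newton (v : Fin n → Fin d → ℤ) (A : Finset (Fin d → ℤ)) : Set (Fin d → ℝ) :=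
  convexHull ℝ (toR '' ↑A) + dualCone v

/-- The set `Q(A) = ⋃_{a ∈ A} (a + σ^∨)`. -/
def QSet (v : Fin n → Fin d → ℤ) (A : Finset (Fin d → ℤ)) : Set (Fin d → ℝ) :=
  ⋃ a ∈ A, (toR a +ᵥ dualCone v)

/-- `λ_A(u) = sup {λ > 0 | u ∈ λ·P(A)}` (and `0` if no such `λ` exists;
note `Real.sSup` of the empty set is `0`). -/
def lam (v : Fin n → Fin d → ℤ) (A : Finset (Fin d → ℤ)) (u : Fin d → ℝ) : ℝ :=
  sSup {l : ℝ | 0 < l ∧ u ∈ l • newton v A}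

/-- `Q(m)` for the maximal monomial ideal, whose exponent set is
`(σ^∨ ∩ ℤ^d) \ {0}`. -/
def Qm (v : Fin n → Fin d → ℤ) : Set (Fin d → ℝ) :=
  ⋃ a ∈ {a : Fin d → ℤ | toR a ∈ dualCone v ∧ a ≠ 0}, (toR a +ᵥ dualCone v)

/-- The set `O = {u ∈ σ^∨ | ⟨u, v_j⟩ ≥ 1 for some j}`. -/
def OSet (v : Fin n → Fin d → ℤ) : Set (Fin d → ℝ) :=
  {u ∈ dualCone v | ∃ j, 1 ≤ pair u (toR (v j))}


/-- `μ_A(u) = sup_{ω ∈ σ^∨ \ O} λ_A(u + ω)` for a lattice point `u`. -/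
def muA (v : Fin n → Fin d → ℤ) (A : Finset (Fin d → ℤ)) (u : Fin d → ℤ) : ℝ :=
  sSup (lam v A '' (toR u +ᵥ (dualCone v \ OSet v)))

/- ===== auxiliary lemmas ===== -/

lemma pair_add_left (x y w : Fin d → ℝ) : pair (x + y) w = pair x w + pair y w := by
  simp [pair, add_mul, Finset.sum_add_distrib]

lemma pair_smul_left (c : ℝ) (x w : Fin d → ℝ) : pair (c • x) w = c * pair x w := by
  simp [pair, Finset.mul_sum, mul_assoc]

lemma pair_add_right (u x y : Fin d → ℝ) : pair u (x + y) = pair u x + pair u y := by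
  simp [pair, mul_add, Finset.sum_add_distrib]

lemma pair_smul_right (c : ℝ) (u x : Fin d → ℝ) : pair u (c • x) = c * pair u x := by
  simp [pair, Finset.mul_sum, mul_left_comm]

lemma pair_zero_left (w : Fin d → ℝ) : pair 0 w = 0 := by simp [pair]

lemma pair_zero_right (u : Fin d → ℝ) : pair u 0 = 0 := by simp [pair]

lemma toR_add (u z : Fin d → ℤ) : toR (u + z) = toR u + toR z := by
  funext i; simp [toR]

lemma toR_zero : toR (0 : Fin d → ℤ) = 0 := by funext i; simp [toR]

lemma vj_mem_cone (v : Fin n → Fin d → ℤ) (j : Fin n) : toR (v j) ∈ cone v := by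
  refine ⟨fun k => if k = j then 1 else 0, fun k => by positivity, ?_⟩
  simp [ite_smul]

lemma zero_mem_dualCone (v : Fin n → Fin d → ℤ) : (0 : Fin d → ℝ) ∈ dualCone v :=
  fun x _ => by rw [pair_zero_left]

lemma add_mem_dualCone {v : Fin n → Fin d → ℤ} {x y : Fin d → ℝ}
    (hx : x ∈ dualCone v) (hy : y ∈ dualCone v) : x + y ∈ dualCone v :=
  fun w hw => by rw [pair_add_left]; exact add_nonneg (hx w hw) (hy w hw)

lemma smul_mem_dualCone {v : Fin n → Fin d → ℤ} {c : ℝ} (hc : 0 ≤ c) {x : Fin d → ℝ}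
    (hx : x ∈ dualCone v) : c • x ∈ dualCone v :=
  fun w hw => by rw [pair_smul_left]; exact mul_nonneg hc (hx w hw)

/-- The linear functional `φ(x) = ∑ⱼ ⟨x, vⱼ⟩`. -/
def phi (v : Fin n → Fin d → ℤ) (x : Fin d → ℝ) : ℝ := ∑ j, pair x (toR (v j))

lemma phi_add (v : Fin n → Fin d → ℤ) (x y : Fin d → ℝ) :
    phi v (x + y) = phi v x + phi v y := by
  simp [phi, pair_add_left, Finset.sum_add_distrib]

lemma phi_smul (v : Fin n → Fin d → ℤ) (c : ℝ) (x : Fin d → ℝ) :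
    phi v (c • x) = c * phi v x := by
  simp [phi, pair_smul_left, Finset.mul_sum]

lemma phi_nonneg {v : Fin n → Fin d → ℤ} {x : Fin d → ℝ} (hx : x ∈ dualCone v) :
    0 ≤ phi v x :=
  Finset.sum_nonneg fun j _ => hx _ (vj_mem_cone v j)

lemma mem_newton_iff {v : Fin n → Fin d → ℤ} {A : Finset (Fin d → ℤ)} {w : Fin d → ℝ} :
    w ∈ newton v A ↔ ∃ c ∈ convexHull ℝ (toR '' ↑A), ∃ s ∈ dualCone v, c + s = w :=
  Set.mem_add

lemma newton_add_dual {v : Fin n → Fin d → ℤ} {A : Finset (Fin d → ℤ)} {w y : Fin d → ℝ}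
    (hw : w ∈ newton v A) (hy : y ∈ dualCone v) : w + y ∈ newton v A := by
  obtain ⟨c, hc, s, hs, rfl⟩ := mem_newton_iff.1 hw
  exact mem_newton_iff.2 ⟨c, hc, s + y, add_mem_dualCone hs hy, (add_assoc c s y).symm⟩

lemma phi_ge_on_newton {v : Fin n → Fin d → ℤ} {A : Finset (Fin d → ℤ)} {m : ℝ}
    (hm0 : 0 ≤ m) (hm : ∀ a ∈ A, m ≤ phi v (toR a)) {w : Fin d → ℝ}
    (hw : w ∈ newton v A) : m ≤ phi v w := by
  obtain ⟨c, hc, s, hs, rfl⟩ := mem_newton_iff.1 hw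
  have hconv : Convex ℝ {y : Fin d → ℝ | m ≤ phi v y} := by
    intro y1 h1 y2 h2 a b ha hb hab
    simp only [Set.mem_setOf_eq] at *
    rw [phi_add, phi_smul, phi_smul]
    calc m = a * m + b * m := by rw [← add_mul, hab, one_mul]
      _ ≤ a * phi v y1 + b * phi v y2 :=
        add_le_add (mul_le_mul_of_nonneg_left h1 ha) (mul_le_mul_of_nonneg_left h2 hb)
  have hsub : convexHull ℝ (toR '' ↑A) ⊆ {y : Fin d → ℝ | m ≤ phi v y} := by
    apply convexHull_min _ hconv
    rintro _ ⟨a, ha, rfl⟩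
    exact hm a ha
  have h1 : m ≤ phi v c := hsub hc
  have h2 : 0 ≤ phi v s := phi_nonneg hs
  rw [phi_add]; linarith

lemma lam_nonneg (v : Fin n → Fin d → ℤ) (A : Finset (Fin d → ℤ)) (u : Fin d → ℝ) :
    0 ≤ lam v A u :=
  Real.sSup_nonneg fun _ hl => hl.1.le

lemma Lset_subset {v : Fin n → Fin d → ℤ} {A : Finset (Fin d → ℤ)} {x y : Fin d → ℝ}
    (hy : y ∈ dualCone v) :
    {l : ℝ | 0 < l ∧ x ∈ l • newton v A} ⊆ {l : ℝ | 0 < l ∧ x + y ∈ l • newton v A} := by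
  rintro l ⟨hl, w, hw, rfl⟩
  refine ⟨hl, w + l⁻¹ • y, newton_add_dual hw (smul_mem_dualCone (by positivity) hy), ?_⟩
  show l • (w + l⁻¹ • y) = l • w + y
  rw [smul_add, smul_inv_smul₀ hl.ne']

lemma Lset_bddAbove {v : Fin n → Fin d → ℤ} {A : Finset (Fin d → ℤ)} {m : ℝ}
    (hm0 : 0 < m) (hm : ∀ a ∈ A, m ≤ phi v (toR a)) (x : Fin d → ℝ) :
    BddAbove {l : ℝ | 0 < l ∧ x ∈ l • newton v A} := by
  refine ⟨phi v x / m, ?_⟩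
  rintro l ⟨hl, w, hw, rfl⟩
  rw [le_div_iff₀ hm0, phi_smul]
  exact mul_le_mul_of_nonneg_left (phi_ge_on_newton hm0.le hm hw) hl.le

lemma lam_le_div {v : Fin n → Fin d → ℤ} {A : Finset (Fin d → ℤ)} {m : ℝ}
    (hm0 : 0 < m) (hm : ∀ a ∈ A, m ≤ phi v (toR a)) {x : Fin d → ℝ} (hx : 0 ≤ phi v x) :
    lam v A x ≤ phi v x / m := by
  refine Real.sSup_le ?_ (by positivity)
  rintro l ⟨hl, w, hw, rfl⟩
  rw [le_div_iff₀ hm0, phi_smul]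
  exact mul_le_mul_of_nonneg_left (phi_ge_on_newton hm0.le hm hw) hl.le

lemma lam_le_lam_add {v : Fin n → Fin d → ℤ} {A : Finset (Fin d → ℤ)} {x y : Fin d → ℝ}
    (hy : y ∈ dualCone v)
    (hbdd : BddAbove {l : ℝ | 0 < l ∧ x + y ∈ l • newton v A}) :
    lam v A x ≤ lam v A (x + y) := by
  refine Real.sSup_le (fun l hl => le_csSup hbdd (Lset_subset hy hl))
    (lam_nonneg v A (x + y))

lemma lam_eq_zero_of_zero_mem {v : Fin n → Fin d → ℤ} {A : Finset (Fin d → ℤ)}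
    (h0 : (0 : Fin d → ℝ) ∈ newton v A) {x : Fin d → ℝ} (hx : x ∈ dualCone v) :
    lam v A x = 0 := by
  have hset : {l : ℝ | 0 < l ∧ x ∈ l • newton v A} = Set.Ioi 0 := by
    ext l
    constructor
    · exact fun h => h.1
    · intro hl
      have hl' : (0:ℝ) < l := hl
      refine ⟨hl', l⁻¹ • x, ?_, smul_inv_smul₀ (ne_of_gt hl') x⟩
      obtain ⟨c, hc, s, hs, hcs⟩ := mem_newton_iff.1 h0
      refine mem_newton_iff.2 ⟨c, hc, s + l⁻¹ • x,
        add_mem_dualCone hs (smul_mem_dualCone (inv_nonneg.2 hl'.le) hx), ?_⟩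
      rw [← add_assoc, hcs, zero_add]
  rw [lam, hset, Real.sSup_of_not_bddAbove (not_bddAbove_Ioi (0:ℝ))]

lemma zero_mem_D (v : Fin n → Fin d → ℤ) : (0 : Fin d → ℝ) ∈ dualCone v \ OSet v := by
  refine ⟨zero_mem_dualCone v, ?_⟩
  rintro ⟨-, j, hj⟩
  rw [pair_zero_left] at hj
  linarith

lemma muA_nonneg (v : Fin n → Fin d → ℤ) (A : Finset (Fin d → ℤ)) (u : Fin d → ℤ) :
    0 ≤ muA v A u :=
  Real.sSup_nonneg (by rintro _ ⟨x, _, rfl⟩; exact lam_nonneg v A x)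

lemma phi_lt_card_of_D {v : Fin n → Fin d → ℤ} {ω : Fin d → ℝ}
    (hω : ω ∈ dualCone v \ OSet v) : phi v ω ≤ n := by
  have h1 : ∀ j, pair ω (toR (v j)) ≤ 1 := by
    intro j
    by_contra h
    exact hω.2 ⟨hω.1, j, by linarith⟩
  calc phi v ω ≤ ∑ _j : Fin n, (1 : ℝ) := Finset.sum_le_sum fun j _ => h1 j
    _ = n := by simp

lemma muA_image_bddAbove {v : Fin n → Fin d → ℤ} {A : Finset (Fin d → ℤ)} {m : ℝ}
    (hm0 : 0 < m) (hm : ∀ a ∈ A, m ≤ phi v (toR a)) {u : Fin d → ℤ}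
    (hu : toR u ∈ dualCone v) :
    BddAbove (lam v A '' (toR u +ᵥ (dualCone v \ OSet v))) := by
  refine ⟨(phi v (toR u) + n) / m, ?_⟩
  rintro _ ⟨_, ⟨ω, hω, rfl⟩, rfl⟩
  have hωd : ω ∈ dualCone v := hω.1
  have hphiu : 0 ≤ phi v (toR u) := phi_nonneg hu
  have h1 : lam v A (toR u +ᵥ ω) ≤ phi v (toR u +ᵥ ω) / m := by
    apply lam_le_div hm0 hm
    exact phi_nonneg (add_mem_dualCone hu hωd)
  refine h1.trans ?_
  rw [div_le_div_iff₀ hm0 hm0]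
  have h2 : phi v (toR u +ᵥ ω) ≤ phi v (toR u) + n := by
    have : (toR u +ᵥ ω) = toR u + ω := rfl
    rw [this, phi_add]
    have := phi_lt_card_of_D hω
    linarith
  nlinarith

lemma muA_mono {v : Fin n → Fin d → ℤ} {A : Finset (Fin d → ℤ)} {m : ℝ}
    (hm0 : 0 < m) (hm : ∀ a ∈ A, m ≤ phi v (toR a)) {u z : Fin d → ℤ}
    (hu : toR u ∈ dualCone v) (hz : toR z ∈ dualCone v) :
    muA v A u ≤ muA v A (u + z) := by
  refine Real.sSup_le ?_ (muA_nonneg v A (u + z))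
  rintro _ ⟨_, ⟨ω, hω, rfl⟩, rfl⟩
  show lam v A (toR u +ᵥ ω) ≤ muA v A (u + z)
  have hx : (toR u +ᵥ ω) + toR z = toR (u + z) +ᵥ ω := by
    rw [toR_add]
    show toR u + ω + toR z = toR u + toR z + ω
    ring
  have h1 : lam v A (toR u +ᵥ ω) ≤ lam v A ((toR u +ᵥ ω) + toR z) := by
    apply lam_le_lam_add hz
    exact Lset_bddAbove hm0 hm _
  refine h1.trans ?_
  rw [hx]
  exact le_csSup (muA_image_bddAbove hm0 hm (by rw [toR_add]; exact add_mem_dualCone hu hz))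
    ⟨toR (u + z) +ᵥ ω, ⟨ω, hω, rfl⟩, rfl⟩


/-- the infimum of `μ_A` over all exponents of monomials of the
monomial ideal generated by `B` equals the minimum of `μ_A` over the
generators `b ∈ B`. -/
theorem inf_muA_eq_min
    (d n : ℕ) (hd : 1 ≤ d)
    (v : Fin n → Fin d → ℤ)
    (hsc : StronglyConvex v) (hprim : ∀ j, IsPrimitive (v j))
    (hdim : FullDim v)
    (A : Finset (Fin d → ℤ)) (hAne : A.Nonempty)
    (hAl : ∀ a ∈ A, toR a ∈ dualCone v)
    (B : Finset (Fin d → ℤ)) (hBne : B.Nonempty)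
    (hBl : ∀ b ∈ B, toR b ∈ dualCone v) :
    sInf (muA v A '' ((↑B : Set (Fin d → ℤ)) + {z : Fin d → ℤ | toR z ∈ dualCone v})) =
      B.inf' hBne (muA v A) := by
  set S : Set (Fin d → ℤ) := (↑B : Set (Fin d → ℤ)) + {z : Fin d → ℤ | toR z ∈ dualCone v}
    with hS
  have hSdual : ∀ u ∈ S, toR u ∈ dualCone v := by
    rintro _ ⟨b, hb, z, hz, rfl⟩
    rw [toR_add]
    exact add_mem_dualCone (hBl b hb) hz
  have hBS : ∀ b ∈ B, b ∈ S := by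
    intro b hb
    exact ⟨b, hb, 0, by simp only [Set.mem_setOf_eq, toR_zero]; exact zero_mem_dualCone v,
      add_zero b⟩
  obtain ⟨b0, hb0, hb0e⟩ := Finset.exists_mem_eq_inf' hBne (muA v A)
  set m : ℝ := A.inf' hAne (fun a => phi v (toR a)) with hmdef
  have hm : ∀ a ∈ A, m ≤ phi v (toR a) := fun a ha => Finset.inf'_le _ ha
  have hm0 : 0 ≤ m := by
    obtain ⟨a0, ha0, ha0e⟩ := Finset.exists_mem_eq_inf' hAne (fun a => phi v (toR a))
    rw [hmdef, ha0e]
    exact phi_nonneg (hAl a0 ha0)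
  rcases hm0.eq_or_lt with hmz | hmpos
  · -- m = 0 : some a ∈ A has φ(a) = 0, hence toR a = 0 and 0 ∈ newton; everything is 0
    obtain ⟨a0, ha0, ha0e⟩ := Finset.exists_mem_eq_inf' hAne (fun a => phi v (toR a))
    have hphi0 : phi v (toR a0) = 0 := by rw [← ha0e, ← hmdef, ← hmz]
    have hpairs : ∀ j, pair (toR a0) (toR (v j)) = 0 := by
      have := (Finset.sum_eq_zero_iff_of_nonneg
        (fun j _ => (hAl a0 ha0) _ (vj_mem_cone v j))).1 hphi0
      exact fun j => this j (Finset.mem_univ j)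
    have hpair_all : ∀ x : Fin d → ℝ, pair (toR a0) x = 0 := by
      intro x
      have hx : x ∈ Submodule.span ℝ (Set.range fun j => toR (v j)) := by
        rw [hdim]; trivial
      induction hx using Submodule.span_induction with
      | mem y hy => obtain ⟨j, rfl⟩ := hy; exact hpairs j
      | zero => exact pair_zero_right _
      | add y z _ _ hy hz => rw [pair_add_right, hy, hz, add_zero]
      | smul c y _ hy => rw [pair_smul_right, hy, mul_zero]
    have ha0z : toR a0 = 0 := by
      have hself : pair (toR a0) (toR a0) = 0 := hpair_all _
      have : ∀ i ∈ Finset.univ, toR a0 i * toR a0 i = 0 := by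
        refine (Finset.sum_eq_zero_iff_of_nonneg fun i _ => mul_self_nonneg _).1 hself
      funext i
      exact mul_self_eq_zero.1 (this i (Finset.mem_univ i))
    have h0new : (0 : Fin d → ℝ) ∈ newton v A := by
      refine mem_newton_iff.2 ⟨0, ?_, 0, zero_mem_dualCone v, add_zero 0⟩
      rw [← ha0z]
      exact subset_convexHull ℝ _ ⟨a0, ha0, rfl⟩
    have hmu0 : ∀ u : Fin d → ℤ, toR u ∈ dualCone v → muA v A u = 0 := by
      intro u hu
      refine le_antisymm (Real.sSup_le ?_ le_rfl) (muA_nonneg v A u)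
      rintro _ ⟨_, ⟨ω, hω, rfl⟩, rfl⟩
      exact le_of_eq (lam_eq_zero_of_zero_mem h0new (add_mem_dualCone hu hω.1))
    have himg : muA v A '' S = {0} := by
      apply Set.eq_singleton_iff_nonempty_unique_mem.2
      constructor
      · exact ⟨muA v A b0, ⟨b0, hBS b0 hb0, rfl⟩⟩
      · rintro _ ⟨u, hu, rfl⟩
        exact hmu0 u (hSdual u hu)
    rw [himg, csInf_singleton]
    have : B.inf' hBne (muA v A) = B.inf' hBne (fun _ => (0 : ℝ)) :=
      Finset.inf'_congr hBne rfl fun b hb => hmu0 b (hBl b hb)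
    rw [this, Finset.inf'_const]
  · -- m > 0
    have hbdd : BddBelow (muA v A '' S) := ⟨0, by rintro _ ⟨u, _, rfl⟩; exact muA_nonneg v A u⟩
    apply le_antisymm
    · rw [hb0e]
      exact csInf_le hbdd ⟨b0, hBS b0 hb0, rfl⟩
    · refine le_csInf ⟨muA v A b0, ⟨b0, hBS b0 hb0, rfl⟩⟩ ?_
      rintro _ ⟨u, ⟨b, hb, z, hz, rfl⟩, rfl⟩
      calc B.inf' hBne (muA v A) ≤ muA v A b := Finset.inf'_le _ hb
        _ ≤ muA v A (b + z) := muA_mono hmpos hm (hBl b hb) hz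

end Paper
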